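/- If h > h' are Hessenberg functions (h_i ≥ h'_i for all i and h ≠ h'), then I_h ⊆ I_{h'}, where I_h is the ideal of ℤ[x_1,...,x_n] generated by the truncated elementary symmetric polynomials e_{h_i - r}(x_1,...,x_{h_i}) for 1 ≤ i ≤ n and 0 ≤ r ≤ i - 1. -/

import Mathlib

open MvPolynomial

/-- The index set of variables `x_a, x_{a+1}, ..., x_b` (1-indexed) among `x_1, ..., x_n`. -/
def seg (n a b : ℕ) : Finset (Fin n) :=
  Finset.univ.filter fun i => a ≤ (i : ℕ) + 1 ∧ (i : ℕ) + 1 ≤ b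

/-- Truncated elementary symmetric polynomial of degree `d` in the variables indexed by `S`. -/
noncomputable def ee (n : ℕ) (d : ℤ) (S : Finset (Fin n)) : MvPolynomial (Fin n) ℤ :=
  if 0 ≤ d then ∑ A ∈ S.powersetCard d.toNat, ∏ i ∈ A, X i else 0

/-- Truncated complete homogeneous symmetric polynomial of degree `d` in variables indexed by `S`. -/
noncomputable def te (n : ℕ) (d : ℤ) (S : Finset (Fin n)) : MvPolynomial (Fin n) ℤ :=
  if 0 ≤ d then ∑ m ∈ S.sym d.toNat, ((m : Multiset (Fin n)).map X).prod else 0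

noncomputable def Efun (n : ℕ) (S : Finset (Fin n)) (d : ℕ) : MvPolynomial (Fin n) ℤ :=
  ∑ A ∈ S.powersetCard d, ∏ i ∈ A, X i

lemma ee_eq_E (n : ℕ) (d : ℤ) (S : Finset (Fin n)) (hd : 0 ≤ d) :
    ee n d S = Efun n S d.toNat := by rw [ee, if_pos hd]; rfl

lemma E_zero_of_lt (n : ℕ) (S : Finset (Fin n)) (d : ℕ) (hd : S.card < d) :
    Efun n S d = 0 := by
  rw [Efun, Finset.powersetCard_eq_empty.mpr hd, Finset.sum_empty]

lemma seg_succ (n k : ℕ) (hk : k < n) :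
    seg n 1 (k + 1) = insert ⟨k, hk⟩ (seg n 1 k) := by
  ext i
  simp only [seg, Finset.mem_filter, Finset.mem_univ, true_and, Finset.mem_insert]
  constructor
  · rintro ⟨-, h2⟩
    rcases eq_or_lt_of_le h2 with hle | hlt
    · exact Or.inl (Fin.ext (by simp only [Fin.val_mk]; omega))
    · exact Or.inr ⟨by omega, by omega⟩
  · rintro (rfl | ⟨_, h2⟩)
    · simp
    · exact ⟨by omega, by omega⟩

lemma seg_not_mem (n k : ℕ) (hk : k < n) : (⟨k, hk⟩ : Fin n) ∉ seg n 1 k := by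
  simp [seg]

lemma seg_card (n m : ℕ) (hm : m ≤ n) : (seg n 1 m).card = m := by
  induction m with
  | zero =>
    rw [Finset.card_eq_zero]
    ext i
    simp [seg]
  | succ k ih =>
    have hk : k < n := by omega
    rw [seg_succ n k hk, Finset.card_insert_of_notMem (seg_not_mem n k hk), ih (by omega)]

lemma E_insert (n : ℕ) (a : Fin n) (S : Finset (Fin n)) (ha : a ∉ S) (d : ℕ) :
    Efun n (insert a S) (d + 1) = Efun n S (d + 1) + X a * Efun n S d := by
  classical
  rw [Efun, Finset.powersetCard_succ_insert ha, Finset.sum_union, Finset.sum_image]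
  · rw [Efun, Efun, Finset.mul_sum]
    congr 1
    apply Finset.sum_congr rfl
    intro A hA
    rw [Finset.mem_powersetCard] at hA
    rw [Finset.prod_insert (fun hmem => ha (hA.1 hmem))]
  · intro A hA B hB hAB
    rw [Finset.mem_coe, Finset.mem_powersetCard] at hA hB
    have haA : a ∉ A := fun hmem => ha (hA.1 hmem)
    have haB : a ∉ B := fun hmem => ha (hB.1 hmem)
    rw [← Finset.erase_insert haA, ← Finset.erase_insert haB, hAB]
  · rw [Finset.disjoint_left]
    intro A h1 h2
    rw [Finset.mem_powersetCard] at h1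
    rw [Finset.mem_image] at h2
    obtain ⟨B, _, rfl⟩ := h2
    exact ha (h1.1 (Finset.mem_insert_self a B))

lemma key (n m' R : ℕ) (hR : R < m') (hm'n : m' ≤ n) :
    ∀ m, m' ≤ m → m ≤ n → ∀ d, m ≤ d + R →
      Efun n (seg n 1 m) d ∈
        Ideal.span {p : MvPolynomial (Fin n) ℤ | ∃ s, s ≤ R ∧ p = Efun n (seg n 1 m') (m' - s)} := by
  intro m
  induction m with
  | zero => intro h1 _ _ _; omega
  | succ k ih =>
    intro h1 h2 d hd
    rcases eq_or_lt_of_le h1 with heq | hlt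
    · -- base case: m' = k + 1
      rw [← heq]
      by_cases hdm : d ≤ m'
      · apply Ideal.subset_span
        refine ⟨m' - d, by omega, ?_⟩
        congr 1
        omega
      · rw [E_zero_of_lt n _ d (by rw [seg_card n m' hm'n]; omega)]
        exact Ideal.zero_mem _
    · have hk : m' ≤ k := by omega
      obtain ⟨d', rfl⟩ : ∃ d', d = d' + 1 := ⟨d - 1, by omega⟩
      have hkn : k < n := by omega
      rw [seg_succ n k hkn, E_insert n _ _ (seg_not_mem n k hkn)]
      exact Ideal.add_mem _ (ih hk (by omega) _ (by omega))
        (Ideal.mul_mem_left _ _ (ih hk (by omega) _ (by omega)))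

theorem stmt15 (n : ℕ) (hn : 0 < n) (h h' : Fin n → ℕ)
    (hh1 : ∀ i : Fin n, (i : ℕ) + 1 ≤ h i ∧ h i ≤ n)
    (hh2 : ∀ i j : Fin n, i ≤ j → h i ≤ h j)
    (hh1' : ∀ i : Fin n, (i : ℕ) + 1 ≤ h' i ∧ h' i ≤ n)
    (hh2' : ∀ i j : Fin n, i ≤ j → h' i ≤ h' j)
    (hge : ∀ i : Fin n, h' i ≤ h i) (hne : h ≠ h') :
    Ideal.span {p : MvPolynomial (Fin n) ℤ |
        ∃ i : Fin n, ∃ r : ℕ, r ≤ (i : ℕ) ∧ p = ee n ((h i : ℤ) - r) (seg n 1 (h i))} ≤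
      Ideal.span {p : MvPolynomial (Fin n) ℤ |
        ∃ i : Fin n, ∃ r : ℕ, r ≤ (i : ℕ) ∧ p = ee n ((h' i : ℤ) - r) (seg n 1 (h' i))} := by
  rw [Ideal.span_le]
  rintro p ⟨i, r, hr, rfl⟩
  obtain ⟨hi1, hi2⟩ := hh1 i
  obtain ⟨hi1', hi2'⟩ := hh1' i
  have hgei := hge i
  have hd0 : (0 : ℤ) ≤ (h i : ℤ) - r := by omega
  rw [ee_eq_E _ _ _ hd0]
  have htn : ((h i : ℤ) - r).toNat = h i - r := by omega
  rw [htn]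
  have hkey := key n (h' i) r (by omega) hi2' (h i) hgei hi2 (h i - r) (by omega)
  refine Ideal.span_le.mpr ?_ hkey
  rintro q ⟨s, hs, rfl⟩
  apply Ideal.subset_span
  refine ⟨i, s, le_trans hs hr, ?_⟩
  rw [ee_eq_E _ _ _ (by omega : (0 : ℤ) ≤ (h' i : ℤ) - s)]
  congr 1
  omega
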